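/- Let S be a set of positive integers with 1 ∉ S and such that the sum over s ∈ S of 1/s converges. Then the set of nonmultiples N(S) = {n ≥ 1 : s ∤ n for all s ∈ S} has positive asymptotic density; in particular, its density satisfies d(N(S)) ≥ ∏_{s ∈ S} (1 − 1/s). -/

import Mathlib

open scoped BigOperators

/-- `fibZ m` is the rank of appearance of `m`: the least positive `n` with `m ∣ F_n`. -/
noncomputable def fibZ (m : ℕ) : ℕ := sInf {n : ℕ | 0 < n ∧ m ∣ Nat.fib n}

/-- `fibL m = lcm(m, z(m))`. -/
noncomputable def fibL (m : ℕ) : ℕ := Nat.lcm m (fibZ m)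

/-- `countIn S x` is the number of elements of `S` in `[1, x]`. -/
noncomputable def countIn (S : Set ℕ) (x : ℝ) : ℕ :=
  (S ∩ {n : ℕ | 1 ≤ n ∧ (n : ℝ) ≤ x}).ncard

/-- `S` has asymptotic density `a`. -/
def HasDensity (S : Set ℕ) (a : ℝ) : Prop :=
  Filter.Tendsto (fun x : ℝ => (countIn S x : ℝ) / x) Filter.atTop (nhds a)

/-- `fibA k` is the set of positive integers `n` with `gcd(n, F_n) = k`. -/
def fibA (k : ℕ) : Set ℕ := {n : ℕ | 0 < n ∧ Nat.gcd n (Nat.fib n) = k}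

open scoped Classical
open Filter Finset

namespace NonmultAux

/-- counting elements of a set in `[1, N]`. -/
noncomputable def cntSet (A : Set ℕ) (N : ℕ) : ℕ :=
  ((Finset.Icc 1 N).filter (fun n => n ∈ A)).card

/-- The set of positive nonmultiples of a finite set. -/
def AF (F : Finset ℕ) : Set ℕ := {n : ℕ | 0 < n ∧ ∀ s ∈ F, ¬ s ∣ n}

/-- lcm of a finite set. -/
def LL (F : Finset ℕ) : ℕ := F.lcm id

/-- candidate density. -/
noncomputable def dd (F : Finset ℕ) : ℝ := (cntSet (AF F) (LL F) : ℝ) / (LL F)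

lemma LL_pos {F : Finset ℕ} (hF : ∀ s ∈ F, 0 < s) : 0 < LL F := by
  rcases Nat.eq_zero_or_pos (LL F) with h | h
  · exfalso
    rw [LL, Finset.lcm_eq_zero_iff] at h
    obtain ⟨s, hs, hs0⟩ := h
    exact absurd (hs0 ▸ hF s hs) (by simp [← hs0])
  · exact h

lemma dvd_LL {F : Finset ℕ} {s : ℕ} (hs : s ∈ F) : s ∣ LL F := Finset.dvd_lcm hs

lemma mem_AF_iff {F : Finset ℕ} {n : ℕ} : n ∈ AF F ↔ 0 < n ∧ ∀ s ∈ F, ¬ s ∣ n := Iff.rfl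

lemma cntSet_le (A : Set ℕ) (N : ℕ) : cntSet A N ≤ N := by
  calc cntSet A N ≤ (Finset.Icc 1 N).card := Finset.card_filter_le _ _
  _ = N := by rw [Nat.card_Icc]; omega

lemma cntSet_mono_set {A B : Set ℕ} (h : A ⊆ B) (N : ℕ) : cntSet A N ≤ cntSet B N :=
  Finset.card_le_card (Finset.monotone_filter_right _ (fun n _ hn => h hn))

lemma cntSet_mono_N (A : Set ℕ) {M N : ℕ} (h : M ≤ N) : cntSet A M ≤ cntSet A N :=
  Finset.card_le_card (Finset.filter_subset_filter _ (Finset.Icc_subset_Icc_right h))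

lemma block_count (F : Finset ℕ) (q : ℕ) :
    ((Finset.Ioc (q * LL F) (q * LL F + LL F)).filter (fun n => n ∈ AF F)).card
      = cntSet (AF F) (LL F) := by
  rw [cntSet, show Finset.Icc 1 (LL F) = Finset.Ioc 0 (LL F) from rfl]
  refine Finset.card_nbij' (fun n => n - q * LL F) (fun m => m + q * LL F) ?_ ?_ ?_ ?_
  · intro n hn
    simp only [Finset.mem_coe, Finset.mem_filter, Finset.mem_Ioc] at hn ⊢
    obtain ⟨⟨h1, h2⟩, h3, h4⟩ := hn
    refine ⟨⟨by omega, by omega⟩, by omega, fun s hs hdvd => h4 s hs ?_⟩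
    have hqL : s ∣ q * LL F := Dvd.dvd.mul_left (dvd_LL hs) q
    have : n = (n - q * LL F) + q * LL F := by omega
    rw [this]; exact Nat.dvd_add hdvd hqL
  · intro m hm
    simp only [Finset.mem_coe, Finset.mem_filter, Finset.mem_Ioc] at hm ⊢
    obtain ⟨⟨h1, h2⟩, h3, h4⟩ := hm
    refine ⟨⟨by omega, by omega⟩, by omega, fun s hs hdvd => h4 s hs ?_⟩
    have hqL : s ∣ q * LL F := Dvd.dvd.mul_left (dvd_LL hs) q
    have := Nat.dvd_sub hdvd hqL
    simpa using this
  · intro n hn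
    simp only [Finset.mem_coe, Finset.mem_filter, Finset.mem_Ioc] at hn
    show n - q * LL F + q * LL F = n
    omega
  · intro m hm
    simp only [Finset.mem_coe, Finset.mem_filter, Finset.mem_Ioc] at hm
    show m + q * LL F - q * LL F = m
    omega

lemma cnt_mul (F : Finset ℕ) (q : ℕ) :
    cntSet (AF F) (q * LL F) = q * cntSet (AF F) (LL F) := by
  induction q with
  | zero => simp [cntSet]
  | succ q ih =>
    have hsplit : Finset.Ioc 0 ((q + 1) * LL F)
        = Finset.Ioc 0 (q * LL F) ∪ Finset.Ioc (q * LL F) (q * LL F + LL F) := by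
      rw [Finset.Ioc_union_Ioc_eq_Ioc (Nat.zero_le _) (Nat.le_add_right _ _)]
      ring_nf
    have hIcc : ∀ M : ℕ, Finset.Icc 1 M = Finset.Ioc 0 M := fun M => rfl
    rw [cntSet, hIcc, hsplit, Finset.filter_union, Finset.card_union_of_disjoint, block_count]
    · rw [← hIcc, ← cntSet, ih]; ring
    · refine Finset.disjoint_filter_filter ?_
      rw [Finset.disjoint_left]
      intro n hn hn'
      simp only [Finset.mem_Ioc] at hn hn'
      omega

lemma dd_nonneg (F : Finset ℕ) : 0 ≤ dd F := by
  unfold dd; positivity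

lemma cnt_bound {F : Finset ℕ} (hF : ∀ s ∈ F, 0 < s) (N : ℕ) :
    dd F * N - LL F ≤ (cntSet (AF F) N : ℝ) ∧ (cntSet (AF F) N : ℝ) ≤ dd F * N + LL F := by
  have hL : 0 < LL F := LL_pos hF
  set L := LL F with hLdef
  set c := cntSet (AF F) L with hcdef
  set q := N / L with hqdef
  have h1 : q * L ≤ N := Nat.div_mul_le_self N L
  have h2 : N < (q + 1) * L := by
    calc N = L * q + N % L := (Nat.div_add_mod N L).symm
      _ < L * q + L := Nat.add_lt_add_left (Nat.mod_lt N hL) _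
      _ = (q + 1) * L := by ring
  have lo : q * c ≤ cntSet (AF F) N := by
    rw [← cnt_mul]; exact cntSet_mono_N _ h1
  have hi : cntSet (AF F) N ≤ (q + 1) * c := by
    rw [← cnt_mul]; exact cntSet_mono_N _ (le_of_lt h2)
  have hcL : c ≤ L := cntSet_le _ _
  have hL0 : (0:ℝ) < L := by exact_mod_cast hL
  have hc : (c : ℝ) = dd F * L := by
    rw [dd, ← hLdef, ← hcdef]; field_simp
  have hq1 : (q : ℝ) * L ≤ N := by exact_mod_cast h1
  have hq2 : (N : ℝ) < ((q : ℝ) + 1) * L := by exact_mod_cast h2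
  have hlo' : (q : ℝ) * c ≤ (cntSet (AF F) N : ℝ) := by exact_mod_cast lo
  have hhi' : (cntSet (AF F) N : ℝ) ≤ ((q : ℝ) + 1) * c := by exact_mod_cast hi
  have hcL' : (c : ℝ) ≤ L := by exact_mod_cast hcL
  have hdd0 : 0 ≤ dd F := dd_nonneg F
  have key1 : dd F * N ≤ (q : ℝ) * c + c := by
    calc dd F * N ≤ dd F * (((q:ℝ) + 1) * L) := by
          exact mul_le_mul_of_nonneg_left hq2.le hdd0
      _ = ((q:ℝ) + 1) * (dd F * L) := by ring
      _ = ((q:ℝ) + 1) * c := by rw [← hc]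
      _ = (q:ℝ) * c + c := by ring
  have key2 : (q : ℝ) * c ≤ dd F * N := by
    calc (q:ℝ) * c = (q:ℝ) * (dd F * L) := by rw [← hc]
      _ = dd F * ((q:ℝ) * L) := by ring
      _ ≤ dd F * N := mul_le_mul_of_nonneg_left hq1 hdd0
  exact ⟨by linarith, by linarith⟩

lemma tendsto_dd {F : Finset ℕ} (hF : ∀ s ∈ F, 0 < s) :
    Tendsto (fun N : ℕ => (cntSet (AF F) N : ℝ) / N) atTop (nhds (dd F)) := by
  have hL : (0:ℝ) < LL F := by exact_mod_cast LL_pos hF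
  have hzero : Tendsto (fun N : ℕ => (LL F : ℝ) / N) atTop (nhds 0) :=
    Tendsto.div_atTop tendsto_const_nhds tendsto_natCast_atTop_atTop
  have hlow : Tendsto (fun N : ℕ => dd F - (LL F : ℝ) / N) atTop (nhds (dd F)) := by
    simpa using tendsto_const_nhds.sub hzero
  have hhigh : Tendsto (fun N : ℕ => dd F + (LL F : ℝ) / N) atTop (nhds (dd F)) := by
    simpa using tendsto_const_nhds.add hzero
  refine tendsto_of_tendsto_of_tendsto_of_le_of_le' hlow hhigh ?_ ?_
  · filter_upwards [eventually_ge_atTop 1] with N hN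
    have hN0 : (0:ℝ) < N := by exact_mod_cast hN
    have hb := (cnt_bound hF N).1
    rw [sub_le_iff_le_add, ← add_div, le_div_iff₀ hN0]
    linarith
  · filter_upwards [eventually_ge_atTop 1] with N hN
    have hN0 : (0:ℝ) < N := by exact_mod_cast hN
    have hb := (cnt_bound hF N).2
    rw [div_le_iff₀ hN0]
    have hexp : (dd F + (LL F : ℝ) / N) * N = dd F * N + LL F := by field_simp
    rw [hexp]; exact hb

lemma filter_dvd_card_le {F : Finset ℕ} {a : ℕ} (ha : 0 < a) (N : ℕ) :
    ((Finset.Icc 1 N).filter (fun n => n ∈ AF F ∧ a ∣ n)).card ≤ cntSet (AF F) (N / a) := by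
  apply Finset.card_le_card_of_injOn (fun n => n / a)
  · intro n hn
    simp only [Finset.mem_coe, Finset.mem_filter, Finset.mem_Icc, AF, Set.mem_setOf_eq] at hn ⊢
    obtain ⟨⟨h1, h2⟩, ⟨hpos, havoid⟩, hdvd⟩ := hn
    obtain ⟨m, rfl⟩ := hdvd
    rw [Nat.mul_div_cancel_left _ ha]
    have hm : 0 < m := by
      rcases Nat.eq_zero_or_pos m with rfl | hm
      · simp at hpos
      · exact hm
    refine ⟨⟨hm, ?_⟩, hm, fun s hs hsm => havoid s hs (Dvd.dvd.mul_left hsm a)⟩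
    rw [Nat.le_div_iff_mul_le ha, mul_comm]
    exact h2
  · intro x hx y hy hxy
    simp only [Finset.coe_filter, Set.mem_setOf_eq, Finset.mem_Icc] at hx hy
    obtain ⟨-, -, hax⟩ := hx
    obtain ⟨-, -, hay⟩ := hy
    change x / a = y / a at hxy
    have : x / a * a = y / a * a := by rw [hxy]
    rwa [Nat.div_mul_cancel hax, Nat.div_mul_cancel hay] at this

lemma insert_le (F : Finset ℕ) (a N : ℕ) (ha : 0 < a) :
    cntSet (AF F) N ≤ cntSet (AF (insert a F)) N + cntSet (AF F) (N / a) := by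
  have hsub : (Finset.Icc 1 N).filter (fun n => n ∈ AF F)
      ⊆ (Finset.Icc 1 N).filter (fun n => n ∈ AF (insert a F))
        ∪ (Finset.Icc 1 N).filter (fun n => n ∈ AF F ∧ a ∣ n) := by
    intro n hn
    simp only [Finset.mem_union, Finset.mem_filter, AF, Set.mem_setOf_eq,
      Finset.mem_insert] at hn ⊢
    by_cases hd : a ∣ n
    · exact Or.inr ⟨hn.1, hn.2, hd⟩
    · refine Or.inl ⟨hn.1, hn.2.1, fun s hs => ?_⟩
      rcases hs with rfl | hs
      · exact hd
      · exact hn.2.2 s hs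
  calc cntSet (AF F) N
      ≤ ((Finset.Icc 1 N).filter (fun n => n ∈ AF (insert a F))
        ∪ (Finset.Icc 1 N).filter (fun n => n ∈ AF F ∧ a ∣ n)).card :=
        Finset.card_le_card hsub
    _ ≤ cntSet (AF (insert a F)) N
        + ((Finset.Icc 1 N).filter (fun n => n ∈ AF F ∧ a ∣ n)).card :=
        Finset.card_union_le _ _
    _ ≤ cntSet (AF (insert a F)) N + cntSet (AF F) (N / a) := by
        exact Nat.add_le_add_left (filter_dvd_card_le ha N) _

lemma heilbronn (F : Finset ℕ) (hF : ∀ s ∈ F, 2 ≤ s) :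
    ∏ s ∈ F, (1 - 1 / (s : ℝ)) ≤ dd F := by
  induction F using Finset.induction_on with
  | empty =>
    have h1 : LL (∅ : Finset ℕ) = 1 := by simp [LL]
    have h2 : cntSet (AF (∅ : Finset ℕ)) 1 = 1 := by
      rw [cntSet, Finset.filter_true_of_mem]
      · simp
      · intro x hx
        simp only [Finset.mem_Icc] at hx
        exact ⟨by omega, by simp⟩
    rw [dd, h1, h2]
    norm_num
  | @insert a F haF ih =>
    have ha2 : 2 ≤ a := hF a (Finset.mem_insert_self a F)
    have hF2 : ∀ s ∈ F, 2 ≤ s := fun s hs => hF s (Finset.mem_insert_of_mem hs)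
    have hFpos : ∀ s ∈ F, 0 < s := fun s hs => by have := hF2 s hs; omega
    have hIpos : ∀ s ∈ insert a F, 0 < s := fun s hs => by have := hF s hs; omega
    have ha0 : (0:ℝ) < a := by positivity
    set d := dd F with hd
    set L := LL F with hLdef
    have hdd0 : 0 ≤ d := dd_nonneg F
    have hc : ∀ N : ℕ, d * N - d * ((N:ℝ) / a) - 2 * L ≤ (cntSet (AF (insert a F)) N : ℝ) := by
      intro N
      have h1 := insert_le F a N (by omega)
      have h2 := (cnt_bound hFpos N).1
      have h3 := (cnt_bound hFpos (N / a)).2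
      have h4 : ((N / a : ℕ) : ℝ) ≤ (N : ℝ) / a := Nat.cast_div_le
      have h5 : d * ((N / a : ℕ) : ℝ) ≤ d * ((N : ℝ) / a) :=
        mul_le_mul_of_nonneg_left h4 hdd0
      have h1' : (cntSet (AF F) N : ℝ)
          ≤ (cntSet (AF (insert a F)) N : ℝ) + (cntSet (AF F) (N / a) : ℝ) := by
        exact_mod_cast h1
      linarith
    have hkey : d * (1 - 1 / a) ≤ dd (insert a F) := by
      have hzero : Tendsto (fun N : ℕ => 2 * (L : ℝ) / N) atTop (nhds 0) :=
        Tendsto.div_atTop tendsto_const_nhds tendsto_natCast_atTop_atTop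
      have hlow : Tendsto (fun N : ℕ => d - d / a - 2 * (L : ℝ) / N) atTop
          (nhds (d * (1 - 1 / a))) := by
        have hconst : Tendsto (fun _ : ℕ => d - d / (a:ℝ)) atTop (nhds (d - d / (a:ℝ))) :=
          tendsto_const_nhds
        have := hconst.sub hzero
        have heq : d - d / a - 0 = d * (1 - 1 / a) := by ring
        rwa [heq] at this
      refine le_of_tendsto_of_tendsto hlow (tendsto_dd hIpos) ?_
      filter_upwards [eventually_ge_atTop 1] with N hN
      have hN0 : (0:ℝ) < N := by exact_mod_cast hN
      rw [le_div_iff₀ hN0]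
      have ha0' : (a:ℝ) ≠ 0 := ne_of_gt ha0
      have hN0' : (N:ℝ) ≠ 0 := ne_of_gt hN0
      have hexp : (d - d / a - 2 * (L:ℝ) / N) * N = d * N - d * ((N:ℝ) / a) - 2 * L := by
        field_simp
      rw [hexp]
      exact hc N
    rw [Finset.prod_insert haF]
    have h1a : 0 ≤ 1 - 1 / (a:ℝ) := by
      rw [sub_nonneg, div_le_one ha0]
      exact_mod_cast (by omega : 1 ≤ a)
    calc (1 - 1 / (a:ℝ)) * ∏ s ∈ F, (1 - 1 / (s : ℝ))
        ≤ (1 - 1 / (a:ℝ)) * d := mul_le_mul_of_nonneg_left (ih hF2) h1a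
      _ = d * (1 - 1 / (a:ℝ)) := mul_comm _ _
      _ ≤ dd (insert a F) := hkey

lemma card_multiples (s N : ℕ) : ((Finset.Icc 1 N).filter (fun n => s ∣ n)).card = N / s := by
  have h : Finset.Icc 1 N = Finset.Ioc 0 N := rfl
  rw [h]
  convert Nat.Ioc_filter_dvd_card_eq_div N s using 2

lemma le_of_eps {a b : ℝ} (h : ∀ ε : ℝ, 0 < ε → a ≤ b + ε) : a ≤ b := by
  by_contra h'
  push_neg at h'
  have := h ((a - b)/2) (by linarith)
  linarith

lemma neg_log_le {y : ℝ} (h2 : 2 ≤ y) :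
    0 < 1 - 1/y ∧ -Real.log (1 - 1/y) ≤ 2 * (1/y) := by
  have hy : (0:ℝ) < y := by linarith
  have hx1 : 1/y ≤ 1/2 := by
    apply one_div_le_one_div_of_le <;> linarith
  have hx0 : (0:ℝ) < 1/y := by positivity
  set x := 1/y with hxdef
  have h1x : 0 < 1 - x := by linarith
  refine ⟨h1x, ?_⟩
  rw [neg_le, ← Real.log_exp (-(2 * x))]
  apply Real.log_le_log (Real.exp_pos _)
  have e1 : Real.exp (-(2 * x)) ≤ 1/(1 + 2*x) := by
    rw [Real.exp_neg, inv_eq_one_div]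
    apply one_div_le_one_div_of_le (by linarith)
    have := Real.add_one_le_exp (2*x)
    linarith
  have e2 : 1/(1 + 2*x) ≤ 1 - x := by
    rw [div_le_iff₀ (by linarith)]
    nlinarith
  linarith

end NonmultAux

open NonmultAux

theorem nonmultiples_density_pos (S : Set ℕ) (hS : ∀ s ∈ S, 0 < s) (h1 : 1 ∉ S)
    (h : Summable (fun s : S => (1 : ℝ) / (s : ℝ))) :
    ∃ a : ℝ, HasDensity {n : ℕ | 0 < n ∧ ∀ s ∈ S, ¬ s ∣ n} a ∧ 0 < a ∧
      (∏' s : S, (1 - 1 / (s : ℝ))) ≤ a := by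
  set A : Set ℕ := {n : ℕ | 0 < n ∧ ∀ s ∈ S, ¬ s ∣ n} with hAdef
  clear_value A
  have hS2 : ∀ s ∈ S, 2 ≤ s := by
    intro s hs
    have h0 := hS s hs
    have hne : s ≠ 1 := fun hh => h1 (hh ▸ hs)
    omega
  have hs2 : ∀ s : S, (2:ℝ) ≤ ((s : ℕ) : ℝ) := fun s => by exact_mod_cast hS2 s s.2
  have hposf : ∀ s : S, 0 < 1 - 1/((s:ℕ):ℝ) := fun s => (neg_log_le (hs2 s)).1
  -- infinite product facts
  have hlogsum : Summable (fun s : S => -Real.log (1 - 1/((s:ℕ):ℝ))) := by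
    apply Summable.of_nonneg_of_le (fun s => ?_) (fun s => (neg_log_le (hs2 s)).2)
      (h.mul_left 2)
    rw [neg_nonneg]
    apply Real.log_nonpos
    · have := hposf s
      linarith
    · have : (0:ℝ) ≤ 1/((s:ℕ):ℝ) := by positivity
      linarith
  have hlogsum' : Summable (fun s : S => Real.log (1 - 1/((s:ℕ):ℝ))) := by
    have := hlogsum.neg
    simpa using this
  obtain ⟨t, ht⟩ := hlogsum'
  have hP : HasProd (fun s : S => 1 - 1/((s:ℕ):ℝ)) (Real.exp t) := by
    have h2 := ht.rexp
    have heq : (Real.exp ∘ fun s : S => Real.log (1 - 1/((s:ℕ):ℝ)))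
        = (fun s : S => 1 - 1/((s:ℕ):ℝ)) := by
      funext s
      simp only [Function.comp_apply]
      exact Real.exp_log (hposf s)
    rwa [heq] at h2
  set P : ℝ := Real.exp t with hPdef
  have hPpos : 0 < P := Real.exp_pos t
  have htprod : ∏' s : S, (1 - 1/((s:ℕ):ℝ)) = P := hP.tprod_eq
  -- summability as indicator
  have hind : Summable (Set.indicator S (fun n : ℕ => 1/(n:ℝ))) :=
    summable_subtype_iff_indicator.mp h
  -- main approximation claim
  have main : ∀ ε : ℝ, 0 < ε → ∀ G : Finset ℕ, (∀ s ∈ G, s ∈ S) →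
      ∃ F : Finset ℕ, G ⊆ F ∧ (∀ s ∈ F, s ∈ S) ∧
        (∀ N : ℕ, cntSet A N ≤ cntSet (AF F) N) ∧
        (∀ N : ℕ, (cntSet (AF F) N : ℝ) ≤ (cntSet A N : ℝ) + ε * N) := by
    intro ε hε G hG
    obtain ⟨T, hT⟩ := hind.vanishing (Ioo_mem_nhds (by linarith : -ε < 0) hε)
    refine ⟨(T ∪ G).filter (fun s => s ∈ S), ?_, ?_, ?_, ?_⟩
    · intro g hg
      exact Finset.mem_filter.mpr ⟨Finset.mem_union_right _ hg, hG g hg⟩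
    · intro s hs
      exact (Finset.mem_filter.mp hs).2
    · intro N
      apply cntSet_mono_set
      intro n hn
      rw [hAdef] at hn
      exact ⟨hn.1, fun s hs => hn.2 s (Finset.mem_filter.mp hs).2⟩
    · intro N
      set F := (T ∪ G).filter (fun s => s ∈ S) with hF
      set GN := (Finset.Icc 1 N).filter (fun s => s ∈ S ∧ s ∉ F) with hGN
      have hsub : (Finset.Icc 1 N).filter (fun n => n ∈ AF F)
          ⊆ (Finset.Icc 1 N).filter (fun n => n ∈ A)
            ∪ GN.biUnion (fun s => (Finset.Icc 1 N).filter (fun n => s ∣ n)) := by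
        intro n hn
        simp only [Finset.mem_filter, Finset.mem_Icc, AF, Set.mem_setOf_eq] at hn
        obtain ⟨⟨hn1, hn2⟩, hnpos, havoid⟩ := hn
        by_cases hnA : n ∈ A
        · exact Finset.mem_union_left _
            (Finset.mem_filter.mpr ⟨Finset.mem_Icc.mpr ⟨hn1, hn2⟩, hnA⟩)
        · have hex : ∃ s ∈ S, s ∣ n := by
            by_contra hc
            push_neg at hc
            rw [hAdef] at hnA
            exact hnA ⟨hnpos, hc⟩
          obtain ⟨s, hsS, hsd⟩ := hex
          have hsF : s ∉ F := fun hsF => havoid s hsF hsd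
          have hs1 : 1 ≤ s := hS s hsS
          have hsN : s ≤ N := le_trans (Nat.le_of_dvd hnpos hsd) hn2
          apply Finset.mem_union_right
          apply Finset.mem_biUnion.mpr
          exact ⟨s, Finset.mem_filter.mpr ⟨Finset.mem_Icc.mpr ⟨hs1, hsN⟩, hsS, hsF⟩,
            Finset.mem_filter.mpr ⟨Finset.mem_Icc.mpr ⟨hn1, hn2⟩, hsd⟩⟩
      have hcard : cntSet (AF F) N ≤ cntSet A N + ∑ s ∈ GN, (N / s) := by
        calc cntSet (AF F) N
            ≤ ((Finset.Icc 1 N).filter (fun n => n ∈ A)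
              ∪ GN.biUnion (fun s => (Finset.Icc 1 N).filter (fun n => s ∣ n))).card :=
              Finset.card_le_card hsub
          _ ≤ cntSet A N + (GN.biUnion (fun s => (Finset.Icc 1 N).filter (fun n => s ∣ n))).card := by
              unfold cntSet
              apply Finset.card_union_le
          _ ≤ cntSet A N + ∑ s ∈ GN, (N / s) := by
              apply Nat.add_le_add_left
              calc (GN.biUnion (fun s => (Finset.Icc 1 N).filter (fun n => s ∣ n))).card
                  ≤ ∑ s ∈ GN, ((Finset.Icc 1 N).filter (fun n => s ∣ n)).card :=
                    Finset.card_biUnion_le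
                _ = ∑ s ∈ GN, N / s := Finset.sum_congr rfl (fun s _ => card_multiples s N)
      have hsum : ∑ s ∈ GN, ((N / s : ℕ) : ℝ) ≤ ε * N := by
        have hdisj : Disjoint GN T := by
          rw [Finset.disjoint_left]
          intro s hs hsT
          obtain ⟨hmem, hsS, hsF⟩ := Finset.mem_filter.mp hs
          exact hsF (Finset.mem_filter.mpr ⟨Finset.mem_union_left _ hsT, hsS⟩)
        have hε' := hT GN hdisj
        have heq : ∑ s ∈ GN, Set.indicator S (fun n : ℕ => 1/(n:ℝ)) s
            = ∑ s ∈ GN, 1/(s:ℝ) :=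
          Finset.sum_congr rfl
            (fun s hs => Set.indicator_of_mem ((Finset.mem_filter.mp hs).2.1) _)
        have hlt : ∑ s ∈ GN, 1/(s:ℝ) < ε := by
          rw [← heq]
          exact (Set.mem_Ioo.mp hε').2
        calc ∑ s ∈ GN, ((N / s : ℕ) : ℝ)
            ≤ ∑ s ∈ GN, (N : ℝ) * (1/(s:ℝ)) := by
              apply Finset.sum_le_sum
              intro s hs
              rw [mul_one_div]
              exact Nat.cast_div_le
          _ = (N:ℝ) * ∑ s ∈ GN, 1/(s:ℝ) := (Finset.mul_sum _ _ _).symm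
          _ ≤ (N:ℝ) * ε := mul_le_mul_of_nonneg_left hlt.le (Nat.cast_nonneg N)
          _ = ε * N := mul_comm _ _
      have hcard' : (cntSet (AF F) N : ℝ) ≤ (cntSet A N : ℝ) + ∑ s ∈ GN, ((N / s : ℕ) : ℝ) := by
        exact_mod_cast hcard
      linarith
  -- the sequence and its boundedness
  set u : ℕ → ℝ := fun N => (cntSet A N : ℝ) / N with hu
  have hu0 : ∀ N, 0 ≤ u N := fun N => by positivity
  have hu1 : ∀ N, u N ≤ 1 := by
    intro N
    rcases Nat.eq_zero_or_pos N with rfl | hN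
    · simp [hu]
    · apply div_le_one_of_le₀
      · exact_mod_cast cntSet_le A N
      · positivity
  have hbdd : IsBoundedUnder (· ≤ ·) atTop u := isBoundedUnder_of ⟨1, hu1⟩
  have hcobdd : IsBoundedUnder (· ≥ ·) atTop u := isBoundedUnder_of ⟨0, hu0⟩
  -- key step
  have step : ∀ ε : ℝ, 0 < ε → ∀ G : Finset ℕ, (∀ s ∈ G, s ∈ S) →
      ∃ F : Finset ℕ, G ⊆ F ∧ (∀ s ∈ F, s ∈ S) ∧ (∀ s ∈ F, 2 ≤ s) ∧
        limsup u atTop ≤ dd F ∧ dd F - ε ≤ liminf u atTop := by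
    intro ε hε G hG
    obtain ⟨F, hGF, hFS, hup, hlow⟩ := main ε hε G hG
    have hF2 : ∀ s ∈ F, 2 ≤ s := fun s hs => hS2 s (hFS s hs)
    have hFpos : ∀ s ∈ F, 0 < s := fun s hs => by have := hF2 s hs; omega
    have hv := tendsto_dd hFpos
    refine ⟨F, hGF, hFS, hF2, ?_, ?_⟩
    · apply le_of_eps
      intro δ hδ
      apply limsup_le_of_le hcobdd.isCoboundedUnder_le
      have hev1 : ∀ᶠ N in atTop, (cntSet (AF F) N : ℝ)/N < dd F + δ :=
        hv.eventually (eventually_lt_nhds (by linarith))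
      filter_upwards [hev1, eventually_ge_atTop 1] with N hN1 hN2
      have hN0 : (0:ℝ) < N := by exact_mod_cast hN2
      have hle : u N ≤ (cntSet (AF F) N : ℝ)/N := by
        show (cntSet A N : ℝ)/(N:ℝ) ≤ (cntSet (AF F) N : ℝ)/(N:ℝ)
        gcongr
        exact_mod_cast hup N
      linarith
    · apply le_of_eps
      intro δ hδ
      rw [← sub_le_iff_le_add]
      apply le_liminf_of_le hbdd.isCoboundedUnder_ge
      have hev2 : ∀ᶠ N in atTop, dd F - δ < (cntSet (AF F) N : ℝ)/N :=
        hv.eventually (eventually_gt_nhds (by linarith))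
      filter_upwards [hev2, eventually_ge_atTop 1] with N hN1 hN2
      have hN0 : (0:ℝ) < N := by exact_mod_cast hN2
      have hdiv : (cntSet (AF F) N : ℝ)/N - ε ≤ u N := by
        rw [hu, sub_le_iff_le_add, div_add' _ _ _ (ne_of_gt hN0), div_le_div_iff₀ hN0 hN0]
        have := hlow N
        nlinarith
      linarith
  -- liminf = limsup
  have heq : liminf u atTop = limsup u atTop := by
    apply le_antisymm (liminf_le_limsup hbdd hcobdd)
    apply le_of_eps
    intro ε hε
    obtain ⟨F, -, -, -, hup, hlow⟩ := step ε hε ∅ (by simp)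
    linarith
  set a : ℝ := limsup u atTop with ha
  have hconv : Tendsto u atTop (nhds a) :=
    tendsto_of_liminf_eq_limsup heq rfl hbdd hcobdd
  -- a ≥ P
  have haP : P ≤ a := by
    apply le_of_eps
    intro ε hε
    have hev : ∀ᶠ T : Finset S in atTop, P - ε/2 < ∏ s ∈ T, (1 - 1/((s:ℕ):ℝ)) :=
      hP.eventually (eventually_gt_nhds (by linarith))
    obtain ⟨T₀, hT₀⟩ := eventually_atTop.mp hev
    set G : Finset ℕ := T₀.image (Subtype.val : {x // x ∈ S} → ℕ) with hG
    have hGS : ∀ s ∈ G, s ∈ S := by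
      intro s hs
      rw [hG, Finset.mem_image] at hs
      obtain ⟨w, hw, hws⟩ := hs
      rw [← hws]
      exact w.2
    obtain ⟨F, hGF, hFS, hF2, hup, hlow⟩ := step (ε/2) (by linarith) G hGS
    set T₁ : Finset S := F.subtype (fun s => s ∈ S) with hT₁
    have hT₀T₁ : T₀ ⊆ T₁ := by
      intro w hw
      rw [hT₁, Finset.mem_subtype]
      exact hGF (Finset.mem_image_of_mem _ hw)
    have hmap : (F.subtype (fun s => s ∈ S)).map (Function.Embedding.subtype _) = F := by
      rw [Finset.subtype_map, Finset.filter_true_of_mem hFS]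
    have hprod : ∏ s ∈ T₁, (1 - 1/((s:ℕ):ℝ)) = ∏ s ∈ F, (1 - 1/(s:ℝ)) := by
      rw [hT₁]
      calc ∏ s ∈ F.subtype (fun s => s ∈ S), (1 - 1/((s:ℕ):ℝ))
          = ∏ s ∈ (F.subtype (fun s => s ∈ S)).map (Function.Embedding.subtype _),
              (1 - 1/(s:ℝ)) := by
            rw [Finset.prod_map]
            simp only [Function.Embedding.coe_subtype]
        _ = ∏ s ∈ F, (1 - 1/(s:ℝ)) := by rw [hmap]
    have hPF : P - ε/2 < ∏ s ∈ F, (1 - 1/(s:ℝ)) := by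
      rw [← hprod]
      exact hT₀ T₁ hT₀T₁
    have hHeil := heilbronn F hF2
    have hla : liminf u atTop = a := heq
    linarith [hlow, hHeil, hPF]
  refine ⟨a, ?_, lt_of_lt_of_le hPpos haP, ?_⟩
  · -- HasDensity
    rw [HasDensity]
    have hcount : ∀ x : ℝ, 0 ≤ x → countIn A x = cntSet A ⌊x⌋₊ := by
      intro x hx
      rw [countIn, cntSet]
      have hset : A ∩ {n : ℕ | 1 ≤ n ∧ (n:ℝ) ≤ x}
          = ↑((Finset.Icc 1 ⌊x⌋₊).filter (fun n => n ∈ A)) := by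
        ext n
        simp only [Set.mem_inter_iff, Set.mem_setOf_eq, Finset.coe_filter,
          Finset.mem_Icc, Nat.le_floor_iff hx]
        tauto
      rw [hset, Set.ncard_coe_finset]
    have h1 : Tendsto (fun x : ℝ => u ⌊x⌋₊) atTop (nhds a) :=
      hconv.comp tendsto_nat_floor_atTop
    have h2 : Tendsto (fun x : ℝ => ((⌊x⌋₊ : ℕ) : ℝ)/x) atTop (nhds 1) :=
      tendsto_nat_floor_div_atTop
    have h3 := h1.mul h2
    rw [mul_one] at h3
    apply h3.congr'
    filter_upwards [eventually_ge_atTop (1:ℝ)] with x hx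
    have hx0 : (0:ℝ) ≤ x := by linarith
    have hxne : x ≠ 0 := by linarith
    have hfl : 1 ≤ ⌊x⌋₊ := Nat.le_floor (by exact_mod_cast hx)
    have hflne : ((⌊x⌋₊ : ℕ) : ℝ) ≠ 0 := by
      have : (0:ℝ) < ((⌊x⌋₊ : ℕ) : ℝ) := by exact_mod_cast hfl
      linarith
    rw [hcount x hx0, hu]
    field_simp
  · rw [htprod]
    exact haP
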